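/- Call a rule flat if every argument of its head clause and of each of its body clauses is a variable or a literal, and call a fact flat if every argument in its argument list is a literal. If every rule of a DLS program P is flat, then every fact in the least fixed point of IC_P is flat, and every literal occurring as an argument of such a fact occurs in some rule of P. -/

import Mathlib

namespace DLS

/-! Datalog with first-class facts (DLS): basic syntax and semantics. -/

variable {Rel Lit Var : Type}

/-- A value is either a literal or a fact `R(v₁,…,vₙ)`. -/
inductive Val (Rel Lit : Type) : Type where
  | lit : Lit → Val Rel Lit
  | fact : Rel → List (Val Rel Lit) → Val Rel Lit

/-- A fact is a relation symbol applied to a finite list of values. -/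
abbrev Fact (Rel Lit : Type) : Type := Rel × List (Val Rel Lit)

/-- A database is a set of facts. -/
abbrev Database (Rel Lit : Type) : Type := Set (Fact Rel Lit)

def Fact.toVal (f : Fact Rel Lit) : Val Rel Lit := Val.fact f.1 f.2

mutual
/-- All subfacts of a value: `subfact(R(v₁,…,vₙ)) = {R(v₁,…,vₙ)} ∪ ⋃ᵢ subfact(vᵢ)`,
    and `subfact(v) = ∅` for a literal `v`. -/
def Val.subfacts : Val Rel Lit → Set (Fact Rel Lit)
  | .lit _ => ∅
  | .fact R args => insert (R, args) (Val.subfactsList args)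
def Val.subfactsList : List (Val Rel Lit) → Set (Fact Rel Lit)
  | [] => ∅
  | v :: vs => v.subfacts ∪ Val.subfactsList vs
end

/-- The `subfact` function on facts. -/
def Fact.subfact (f : Fact Rel Lit) : Set (Fact Rel Lit) :=
  Val.subfacts (Val.fact f.1 f.2)

/-- A database is subfact-closed if `db = ⋃ {subfact(f) | f ∈ db}`. -/
def SubfactClosed (db : Database Rel Lit) : Prop :=
  db = ⋃ f ∈ db, Fact.subfact f

/-- An argument of a clause: a variable, a literal, or a (sub)clause. -/
inductive Arg (Rel Lit Var : Type) : Type where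
  | var : Var → Arg Rel Lit Var
  | lit : Lit → Arg Rel Lit Var
  | clause : Rel → List (Arg Rel Lit Var) → Arg Rel Lit Var

/-- A clause is a relation symbol applied to a finite list of arguments. -/
abbrev Clause (Rel Lit Var : Type) : Type := Rel × List (Arg Rel Lit Var)

/-- A substitution maps variables to values. -/
abbrev Subst (Rel Lit Var : Type) : Type := Var → Val Rel Lit

mutual
/-- Applying a substitution to an argument yields a value. -/
def Arg.subst (θ : Subst Rel Lit Var) : Arg Rel Lit Var → Val Rel Lit
  | .var x => θ x
  | .lit l => .lit l
  | .clause R args => .fact R (Arg.substList θ args)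
def Arg.substList (θ : Subst Rel Lit Var) : List (Arg Rel Lit Var) → List (Val Rel Lit)
  | [] => []
  | a :: as => Arg.subst θ a :: Arg.substList θ as
end

/-- `c[θ]`: the fact obtained by substituting each variable of clause `c` by its image. -/
def Clause.subst (θ : Subst Rel Lit Var) (c : Clause Rel Lit Var) : Fact Rel Lit :=
  (c.1, Arg.substList θ c.2)

mutual
/-- The variables occurring in an argument. -/
def Arg.vars : Arg Rel Lit Var → Set Var
  | .var x => {x}
  | .lit _ => ∅
  | .clause _ args => Arg.varsList args
def Arg.varsList : List (Arg Rel Lit Var) → Set Var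
  | [] => ∅
  | a :: as => a.vars ∪ Arg.varsList as
end

/-- The variables occurring in a clause. -/
def Clause.vars (c : Clause Rel Lit Var) : Set Var := Arg.varsList c.2

mutual
/-- The literals occurring in an argument. -/
def Arg.lits : Arg Rel Lit Var → Set Lit
  | .var _ => ∅
  | .lit l => {l}
  | .clause _ args => Arg.litsList args
def Arg.litsList : List (Arg Rel Lit Var) → Set Lit
  | [] => ∅
  | a :: as => a.lits ∪ Arg.litsList as
end

/-- The literals occurring in a clause. -/
def Clause.lits (c : Clause Rel Lit Var) : Set Lit := Arg.litsList c.2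

/-- A rule has a head clause and a finite set of body clauses. -/
structure Rule (Rel Lit Var : Type) : Type where
  head : Clause Rel Lit Var
  body : Set (Clause Rel Lit Var)
  body_finite : body.Finite

/-- The literals occurring in a rule. -/
def Rule.lits (R : Rule Rel Lit Var) : Set Lit :=
  R.head.lits ∪ ⋃ c ∈ R.body, c.lits

/-- A rule is well-scoped if every variable of the head occurs in the body. -/
def Rule.WellScoped (R : Rule Rel Lit Var) : Prop :=
  R.head.vars ⊆ ⋃ c ∈ R.body, c.vars

/-- Immediate consequence of a rule:
    `IC_R(db) = db ∪ ⋃ { subfact(Head(R)[θ]) | θ with Body(R)[θ] ⊆ db }`. -/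
def Rule.IC (R : Rule Rel Lit Var) (db : Database Rel Lit) : Database Rel Lit :=
  db ∪ ⋃ (θ : Subst Rel Lit Var) (_ : ∀ c ∈ R.body, Clause.subst θ c ∈ db),
      Fact.subfact (Clause.subst θ R.head)

/-- A DLS program is a finite set of well-scoped rules. -/
structure Program (Rel Lit Var : Type) : Type where
  rules : Set (Rule Rel Lit Var)
  rules_finite : rules.Finite
  wellScoped : ∀ R ∈ rules, R.WellScoped

/-- Immediate consequence of a program: `IC_P(db) = db ∪ ⋃_{R ∈ P} IC_R(db)`. -/
def Program.IC (P : Program Rel Lit Var) (db : Database Rel Lit) : Database Rel Lit :=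
  db ∪ ⋃ R ∈ P.rules, R.IC db

theorem Rule.IC_mono (R : Rule Rel Lit Var) : Monotone R.IC := by
  intro a b hab x hx
  rcases hx with hx | hx
  · exact Or.inl (hab hx)
  · right
    simp only [Set.mem_iUnion] at hx ⊢
    obtain ⟨θ, hθ, hm⟩ := hx
    exact ⟨θ, fun c hc => hab (hθ c hc), hm⟩

theorem Program.IC_mono (P : Program Rel Lit Var) : Monotone P.IC := by
  intro a b hab x hx
  rcases hx with hx | hx
  · exact Or.inl (hab hx)
  · right
    simp only [Set.mem_iUnion] at hx ⊢
    obtain ⟨R, hR, hm⟩ := hx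
    exact ⟨R, hR, R.IC_mono hab hm⟩

/-- The immediate consequence operator `IC_P`, as a monotone map on the complete
    lattice of databases ordered by inclusion. Its least fixed point is
    `OrderHom.lfp P.ICHom`. -/
def Program.ICHom (P : Program Rel Lit Var) : Database Rel Lit →o Database Rel Lit :=
  ⟨P.IC, P.IC_mono⟩

/-- `I ⊨ R`: for every substitution θ, `Body(R)[θ] ⊆ I` implies `Head(R)[θ] ∈ I`. -/
def Models (I : Database Rel Lit) (R : Rule Rel Lit Var) : Prop :=
  ∀ θ : Subst Rel Lit Var, (∀ c ∈ R.body, Clause.subst θ c ∈ I) → Clause.subst θ R.head ∈ I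

/-- A Herbrand model of `P` is a subfact-closed database satisfying every rule of `P`. -/
def HerbrandModel (P : Program Rel Lit Var) (I : Database Rel Lit) : Prop :=
  SubfactClosed I ∧ ∀ R ∈ P.rules, Models I R

/-- An argument is flat if it is a variable or a literal (not a nested clause). -/
def Arg.IsFlat : Arg Rel Lit Var → Prop
  | .clause _ _ => False
  | _ => True

/-- A clause is flat if every argument is a variable or a literal. -/
def Clause.Flat (c : Clause Rel Lit Var) : Prop := ∀ a ∈ c.2, a.IsFlat

/-- A rule is flat if its head clause and all its body clauses are flat. -/
def Rule.Flat (R : Rule Rel Lit Var) : Prop := R.head.Flat ∧ ∀ c ∈ R.body, c.Flat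

/-- A fact is flat if every argument in its argument list is a literal. -/
def Fact.Flat (f : Fact Rel Lit) : Prop := ∀ v ∈ f.2, ∃ l : Lit, v = Val.lit l

/-- `natFact z s n` encodes the natural number `n` as the fact
    `s(s(...(z())...))` with `n` applications of `s`. -/
def natFact (z s : Rel) : ℕ → Fact Rel Lit
  | 0 => (z, [])
  | n + 1 => (s, [(natFact z s n).toVal])


/-- In a flat argument list, membership of a variable in the variable set implies the
variable occurs literally as an argument. -/
theorem varMem_of_mem_vars {c : Clause Rel Lit Var} (hc : c.Flat) {x : Var}
    (hx : x ∈ c.vars) : Arg.var x ∈ c.2 := by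
  unfold Clause.vars at hx
  have : ∀ (args : List (Arg Rel Lit Var)), (∀ a ∈ args, a.IsFlat) →
      x ∈ Arg.varsList args → Arg.var x ∈ args := by
    intro args
    induction args with
    | nil => intro _ h; simp [Arg.varsList] at h
    | cons a as ih =>
      intro hflat h
      rcases h with h | h
      · cases a with
        | var y => simp [Arg.vars] at h; subst h; exact List.mem_cons_self
        | lit l => simp [Arg.vars] at h
        | clause R args => exact absurd (hflat _ (List.mem_cons_self)) (by simp [Arg.IsFlat])
      · exact List.mem_cons_of_mem _ (ih (fun a ha => hflat a (List.mem_cons_of_mem _ ha)) h)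
  exact this c.2 hc hx

theorem mem_vars_of_varMem_list {x : Var} :
    ∀ {args : List (Arg Rel Lit Var)}, Arg.var x ∈ args → x ∈ Arg.varsList args := by
  intro args
  induction args with
  | nil => intro h; simp at h
  | cons a as ih =>
    intro h
    rcases List.mem_cons.mp h with h | h
    · subst h; exact Or.inl rfl
    · exact Or.inr (ih h)

theorem mem_vars_of_varMem {c : Clause Rel Lit Var} {x : Var}
    (h : Arg.var x ∈ c.2) : x ∈ c.vars := mem_vars_of_varMem_list h

theorem mem_lits_of_litMem_list {l : Lit} :
    ∀ {args : List (Arg Rel Lit Var)}, Arg.lit l ∈ args → l ∈ Arg.litsList args := by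
  intro args
  induction args with
  | nil => intro h; simp at h
  | cons a as ih =>
    intro h
    rcases List.mem_cons.mp h with h | h
    · subst h; exact Or.inl rfl
    · exact Or.inr (ih h)

theorem mem_lits_of_litMem {c : Clause Rel Lit Var} {l : Lit}
    (h : Arg.lit l ∈ c.2) : l ∈ c.lits := mem_lits_of_litMem_list h

theorem subst_mem_of_var_mem_list (θ : Subst Rel Lit Var) {x : Var} :
    ∀ {args : List (Arg Rel Lit Var)}, Arg.var x ∈ args → θ x ∈ Arg.substList θ args := by
  intro args
  induction args with
  | nil => intro h; simp at h
  | cons a as ih =>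
    intro h
    rcases List.mem_cons.mp h with h | h
    · subst h; exact List.mem_cons_self
    · exact List.mem_cons_of_mem _ (ih h)

theorem subst_mem_of_var_mem (θ : Subst Rel Lit Var) {c : Clause Rel Lit Var} {x : Var}
    (h : Arg.var x ∈ c.2) : θ x ∈ (Clause.subst θ c).2 := subst_mem_of_var_mem_list θ h

/-- Hypotheses: args flat; any value of the substituted list comes from a variable or a literal. -/
theorem substList_cases' (θ : Subst Rel Lit Var) :
    ∀ {args : List (Arg Rel Lit Var)}, (∀ a ∈ args, a.IsFlat) →
    ∀ {v : Val Rel Lit}, v ∈ Arg.substList θ args →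
    (∃ x, Arg.var x ∈ args ∧ v = θ x) ∨ (∃ l, Arg.lit l ∈ args ∧ v = Val.lit l) := by
  intro args
  induction args with
  | nil => intro _ v h; simp [Arg.substList] at h
  | cons a as ih =>
    intro hflat v h
    rcases List.mem_cons.mp h with h | h
    · cases a with
      | var y => exact Or.inl ⟨y, List.mem_cons_self, by simpa [Arg.subst] using h⟩
      | lit l => exact Or.inr ⟨l, List.mem_cons_self, by simpa [Arg.subst] using h⟩
      | clause R args => exact absurd (hflat _ (List.mem_cons_self)) (by simp [Arg.IsFlat])
    · rcases ih (fun a ha => hflat a (List.mem_cons_of_mem _ ha)) h with ⟨x, hx, hv⟩ | ⟨l, hl, hv⟩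
      · exact Or.inl ⟨x, List.mem_cons_of_mem _ hx, hv⟩
      · exact Or.inr ⟨l, List.mem_cons_of_mem _ hl, hv⟩

theorem substList_cases (θ : Subst Rel Lit Var) {c : Clause Rel Lit Var} (hc : c.Flat)
    {v : Val Rel Lit} (hv : v ∈ (Clause.subst θ c).2) :
    (∃ x, Arg.var x ∈ c.2 ∧ v = θ x) ∨ (∃ l, Arg.lit l ∈ c.2 ∧ v = Val.lit l) :=
  substList_cases' θ hc hv

theorem subfactsList_of_lits :
    ∀ {vs : List (Val Rel Lit)}, (∀ v ∈ vs, ∃ l : Lit, v = Val.lit l) →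
      Val.subfactsList vs = (∅ : Set (Fact Rel Lit)) := by
  intro vs
  induction vs with
  | nil => intro _; rfl
  | cons v vs ih =>
    intro h
    obtain ⟨l, hl⟩ := h v (List.mem_cons_self)
    subst hl
    show Val.subfacts (Val.lit l) ∪ Val.subfactsList vs = ∅
    rw [ih (fun v hv => h v (List.mem_cons_of_mem _ hv))]
    simp [Val.subfacts]

theorem subfact_of_flat (f : Fact Rel Lit) (hf : f.Flat) : f.subfact = {f} := by
  unfold Fact.subfact
  show insert (f.1, f.2) (Val.subfactsList f.2) = {f}
  rw [subfactsList_of_lits hf]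
  simp

/-- if every rule of a DLS program `P` is flat, then every fact
in the least fixed point of `IC_P` is flat, and every literal occurring as an
argument of such a fact occurs in some rule of `P`. -/
theorem flat_program_lfp_facts_flat {Rel Lit Var : Type} (P : Program Rel Lit Var)
    (hflat : ∀ R ∈ P.rules, R.Flat) :
    ∀ f ∈ OrderHom.lfp P.ICHom, Fact.Flat f ∧
      ∀ l : Lit, Val.lit l ∈ f.2 → ∃ R ∈ P.rules, l ∈ R.lits := by
  set S : Database Rel Lit :=
    {f | Fact.Flat f ∧ ∀ l : Lit, Val.lit l ∈ f.2 → ∃ R ∈ P.rules, l ∈ R.lits} with hS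
  suffices h : OrderHom.lfp P.ICHom ≤ S by
    intro f hf; exact h hf
  apply OrderHom.lfp_le
  intro f hf
  rcases hf with hf | hf
  · exact hf
  simp only [Set.mem_iUnion] at hf
  obtain ⟨R, hR, hic⟩ := hf
  rcases hic with hic | hic
  · exact hic
  simp only [Set.mem_iUnion] at hic
  obtain ⟨θ, hθ, hsub⟩ := hic
  obtain ⟨hheadflat, hbodyflat⟩ := hflat R hR
  -- key: for any head variable x, θ x is a literal whose lit satisfies the condition
  have hvar : ∀ x ∈ R.head.vars, ∃ l : Lit,
      θ x = Val.lit l ∧ ∃ R' ∈ P.rules, l ∈ R'.lits := by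
    intro x hx
    have hx' := P.wellScoped R hR hx
    simp only [Set.mem_iUnion] at hx'
    obtain ⟨c, hc, hxc⟩ := hx'
    have hcflat := hbodyflat c hc
    have hmem : Arg.var x ∈ c.2 := varMem_of_mem_vars hcflat hxc
    have hθx : θ x ∈ (Clause.subst θ c).2 := subst_mem_of_var_mem θ hmem
    obtain ⟨hcS1, hcS2⟩ := hθ c hc
    obtain ⟨l, hl⟩ := hcS1 _ hθx
    refine ⟨l, hl, hcS2 l (hl ▸ hθx)⟩
  -- the head fact is in S
  have hhead : Clause.subst θ R.head ∈ S := by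
    constructor
    · intro v hv
      rcases substList_cases θ hheadflat hv with ⟨x, hxmem, rfl⟩ | ⟨l, _, rfl⟩
      · obtain ⟨l, hl, _⟩ := hvar x (mem_vars_of_varMem hxmem)
        exact ⟨l, hl⟩
      · exact ⟨l, rfl⟩
    · intro l hl
      rcases substList_cases θ hheadflat hl with ⟨x, hxmem, hx⟩ | ⟨l', hl', heq⟩
      · obtain ⟨l', hl', hR'⟩ := hvar x (mem_vars_of_varMem hxmem)
        rw [hl'] at hx
        cases hx
        exact hR'
      · cases heq
        exact ⟨R, hR, Or.inl (mem_lits_of_litMem hl')⟩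
  -- the head fact is flat, so its subfacts are just itself
  have hflathead : Fact.Flat (Clause.subst θ R.head) := hhead.1
  rw [subfact_of_flat _ hflathead] at hsub
  rw [Set.mem_singleton_iff] at hsub
  rw [hsub]
  exact hhead

end DLS
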